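/- Set λ = (m+1)/2, let g be the unique real polynomial with Q̂(x) = (x − λ)·g(x), and let a < 0 be any real number. Since 2·P̂(λ) + g(λ) = 0, the expression (2·P̂(λ + s) + g(λ + s)) is a polynomial in s with zero constant term, so h(r,T) := (2·P̂(λ + r²T) + g(λ + r²T))/r is a polynomial function of (r,T). Then there exist ε > 0 and a real analytic function T₀ : (−ε, ε) → ℝ with T₀(0) = a satisfying T₀'(r) = −h(r, T₀(r))·T₀(r)/P̂(λ + r²·T₀(r)) for all r ∈ (−ε, ε); any real analytic solution of this initial value problem on an open interval around 0 agrees with T₀ on a neighborhood of 0; and T₀ is an even function on (−ε, ε). -/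

import Mathlib

open Polynomial Set Filter Topology

private lemma exists_antideriv {f : ℝ → ℝ} (hf : AnalyticAt ℝ f 0) :
    ∃ F : ℝ → ℝ, AnalyticAt ℝ F 0 ∧ F 0 = 0 ∧ ∀ᶠ x in 𝓝 (0:ℝ), HasDerivAt F (f x) x := by
  obtain ⟨p, rr, hp⟩ : ∃ p r, HasFPowerSeriesOnBall f p 0 r := by
    obtain ⟨p, hp⟩ := hf
    obtain ⟨r, hr⟩ := hp
    exact ⟨p, r, hr⟩
  obtain ⟨r', hr'⟩ := ENNReal.lt_iff_exists_nnreal_btwn.1 hp.r_pos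
  have hr'0 : 0 < r' := by exact_mod_cast hr'.1
  have hr'0R : 0 < (r' : ℝ) := hr'0
  have hr'rad : (r' : ENNReal) < p.radius := lt_of_lt_of_le hr'.2 hp.r_le
  have hsum : Summable fun n => ‖p n‖ * (r' : ℝ) ^ n := p.summable_norm_mul_pow hr'rad
  set b : ℕ → ℝ := fun n => if n = 0 then 0 else p.coeff (n - 1) / n with hb
  set gd : ℕ → ℝ → ℝ := fun n y => if n = 0 then 0 else p.coeff (n - 1) * y ^ (n - 1) with hgd
  set u : ℕ → ℝ := fun n => if n = 0 then 0 else ‖p (n - 1)‖ * (r' : ℝ) ^ (n - 1) with hu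
  have hu_sum : Summable u := by
    rw [← summable_nat_add_iff 1]
    simpa [hu] using hsum
  have hbb : ∀ k : ℕ, ‖b (k + 1)‖ ≤ ‖p k‖ := by
    intro k
    simp only [hb, if_neg (Nat.succ_ne_zero k), Nat.add_sub_cancel]
    rw [p.norm_apply_eq_norm_coef (n := k)]
    rw [norm_div]
    apply div_le_self (norm_nonneg _)
    simp only [Real.norm_natCast]
    exact_mod_cast Nat.one_le_iff_ne_zero.2 (Nat.succ_ne_zero k)
  have hg : ∀ (n : ℕ) (y : ℝ), HasDerivAt (fun z => b n * z ^ n) (gd n y) y := by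
    intro n y
    have h1 : HasDerivAt (fun z : ℝ => b n * z ^ n) (b n * ((n : ℝ) * y ^ (n - 1))) y :=
      (hasDerivAt_pow n y).const_mul (b n)
    convert h1 using 1
    match n with
    | 0 => simp [hgd]
    | (k+1) =>
      simp only [hgd, hb, if_neg (Nat.succ_ne_zero k), Nat.add_sub_cancel]
      have : ((k:ℝ) + 1) ≠ 0 := by positivity
      push_cast
      field_simp
  have hgd_bound : ∀ (n : ℕ) (y : ℝ), y ∈ Metric.ball (0:ℝ) r' → ‖gd n y‖ ≤ u n := by
    intro n y hy
    match n with
    | 0 => simp [hgd, hu]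
    | (k+1) =>
      simp only [hgd, hu, if_neg (Nat.succ_ne_zero k), Nat.add_sub_cancel]
      rw [norm_mul]
      have hyk : ‖y ^ k‖ ≤ (r' : ℝ) ^ k := by
        rw [norm_pow]
        exact pow_le_pow_left₀ (norm_nonneg _) (le_of_lt (by simpa using hy)) k
      have hcoeff : ‖p.coeff k‖ = ‖p k‖ := (p.norm_apply_eq_norm_coef (n := k)).symm
      rw [hcoeff]
      exact mul_le_mul_of_nonneg_left hyk (norm_nonneg _)
  set F : ℝ → ℝ := fun z => ∑' n, b n * z ^ n with hF
  have hsummable : ∀ y : ℝ, ‖y‖ < (r' : ℝ) → Summable fun n => b n * y ^ n := by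
    intro y hy
    rw [← summable_nat_add_iff 1]
    apply Summable.of_norm_bounded (hsum.mul_right (r' : ℝ))
    intro n
    rw [norm_mul]
    calc ‖b (n+1)‖ * ‖y ^ (n+1)‖ ≤ ‖p n‖ * ((r':ℝ) ^ n * r') := by
          apply mul_le_mul (hbb n) _ (norm_nonneg _) (norm_nonneg _)
          rw [norm_pow, pow_succ]
          exact mul_le_mul (pow_le_pow_left₀ (norm_nonneg _) hy.le n) hy.le (norm_nonneg _)
            (pow_nonneg r'.2 n)
      _ = ‖p n‖ * (r':ℝ) ^ n * r' := by ring
  -- derivative of F on the ball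
  have hFderiv : ∀ y : ℝ, y ∈ Metric.ball (0:ℝ) r' →
      HasDerivAt F (∑' n, gd n y) y := by
    intro y hy
    exact hasDerivAt_tsum_of_isPreconnected hu_sum Metric.isOpen_ball
      (convex_ball (0:ℝ) (r':ℝ)).isPreconnected (fun n y _ => hg n y) hgd_bound
      (Metric.mem_ball_self hr'0R) (by
        have : ∀ n : ℕ, b n * (0:ℝ) ^ n = 0 := by
          intro n
          match n with
          | 0 => simp [hb]
          | (k+1) => simp
        simpa [this] using summable_zero) hy
  -- the sum of derivatives is f
  have hsum_gd : ∀ y : ℝ, y ∈ Metric.ball (0:ℝ) r' → (∑' n, gd n y) = f y := by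
    intro y hy
    have hyr : ‖y‖ < (r' : ℝ) := by simpa using hy
    have hmem : y ∈ Metric.eball (0:ℝ) rr := by
      rw [Metric.mem_eball, edist_zero_right]
      calc (‖y‖₊ : ENNReal) < (r' : ENNReal) := by exact_mod_cast hyr
        _ < rr := hr'.2
    have hfs : HasSum (fun n => p.coeff n * y ^ n) (f y) := by
      have := hp.hasSum (y := y) (by simpa using hmem)
      simp only [zero_add] at this
      have e : (fun n => p.coeff n * y ^ n) = fun n => (p n fun _ => y) := by
        funext n
        rw [p.apply_eq_pow_smul_coeff, smul_eq_mul]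
        ring
      rw [e]
      exact this
    have hsg : Summable fun n => gd n y :=
      Summable.of_norm_bounded hu_sum (fun n => hgd_bound n y hy)
    rw [hsg.tsum_eq_zero_add]
    simp only [hgd, if_neg (Nat.succ_ne_zero _), Nat.add_sub_cancel, if_pos rfl]
    rw [zero_add]
    exact hfs.tsum_eq
  -- power series for F
  set q : FormalMultilinearSeries ℝ ℝ ℝ := FormalMultilinearSeries.ofScalars ℝ b with hq
  have hqnorm : ∀ n, ‖q n‖ = ‖b n‖ := fun n => FormalMultilinearSeries.ofScalars_norm ℝ b n
  have hqsum : Summable fun n => ‖q n‖ * (r' : ℝ) ^ n := by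
    simp only [hqnorm]
    rw [← summable_nat_add_iff 1]
    apply Summable.of_norm_bounded (hsum.mul_right (r' : ℝ))
    intro n
    have h1 : ‖b (n+1)‖ * (r':ℝ) ^ (n+1) ≤ ‖p n‖ * (r':ℝ) ^ n * r' := by
      rw [pow_succ, ← mul_assoc]
      exact mul_le_mul_of_nonneg_right
        (mul_le_mul_of_nonneg_right (hbb n) (pow_nonneg r'.2 n)) r'.2
    calc ‖‖b (n+1)‖ * (r':ℝ) ^ (n+1)‖ = ‖b (n+1)‖ * (r':ℝ) ^ (n+1) :=
          Real.norm_of_nonneg (by positivity)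
      _ ≤ ‖p n‖ * (r':ℝ) ^ n * r' := h1
  have hFq : HasFPowerSeriesOnBall F q 0 (r' : ENNReal) := by
    refine ⟨q.le_radius_of_summable hqsum, by exact_mod_cast hr'.1, ?_⟩
    intro y hy
    have hyr : ‖y‖ < (r' : ℝ) := by
      rw [EMetric.mem_ball, edist_zero_right] at hy
      exact_mod_cast hy
    have : ∀ n, (q n fun _ => y) = b n * y ^ n := by
      intro n
      rw [hq, FormalMultilinearSeries.ofScalars_apply_eq, smul_eq_mul]
    rw [zero_add]
    simp only [this]
    exact (hsummable y hyr).hasSum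
  have hF0 : F 0 = 0 := by
    have : ∀ n : ℕ, b n * (0:ℝ) ^ n = 0 := by
      intro n
      match n with
      | 0 => simp [hb]
      | (k+1) => simp
    simp only [hF]
    rw [tsum_congr this, tsum_zero]
  refine ⟨F, hFq.analyticAt, hF0, ?_⟩
  have hball : Metric.ball (0:ℝ) (r':ℝ) ∈ 𝓝 (0:ℝ) := Metric.ball_mem_nhds _ hr'0R
  filter_upwards [hball] with y hy
  have := hFderiv y hy
  rwa [hsum_gd y hy] at this

set_option maxHeartbeats 2000000 in
/-- Lemma 3.12 of the paper: existence, local uniqueness and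
evenness of the real analytic solution T₀ of the initial value problem
T' = −h(r,T)·T/P̂(λ + r²T), T(0) = a, where λ = (m+1)/2 and
h(r,T) = (2·P̂(λ+r²T) + g(λ+r²T))/r.  Since 2·P̂(λ)+g(λ) = 0, the polynomial
2·P̂(λ+s)+g(λ+s) in s has zero constant term, i.e. equals s·S(s) for a
polynomial S, so that h(r,T) = r·T·S(r²T) is a polynomial function of (r,T). -/
theorem stmt_10 (m : ℕ) (hm : 2 ≤ m)
    (lam : Fin (m - 1) → ℝ) (hmono : Monotone lam) (hlt : ∀ i, lam i < 1)
    (P Q Phat Qhat : Polynomial ℝ)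
    (hP : P = ∏ i : Fin (m - 1), (X - C (2 * lam i / ((m : ℝ) + 1))))
    (hQder : ∀ y : ℝ, (derivative Q).eval y = ((m : ℝ) + 1) * y * P.eval y)
    (hQval : Q.eval (2 / ((m : ℝ) + 1)) = 0)
    (hPhat : ∀ x : ℝ, x ≠ 0 → Phat.eval x = x ^ (m - 1) * P.eval (1 / x))
    (hQhat : ∀ x : ℝ, x ≠ 0 → Qhat.eval x = x ^ (m + 1) * Q.eval (1 / x))
    (hQhatval : Qhat.eval (((m : ℝ) + 1) / 2) = 0)
    (hPhatpos : 0 < Phat.eval (((m : ℝ) + 1) / 2))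
    (hQhatder : (derivative Qhat).eval (((m : ℝ) + 1) / 2) =
      -2 * Phat.eval (((m : ℝ) + 1) / 2))
    (g : Polynomial ℝ)
    (hg : Qhat = (X - C (((m : ℝ) + 1) / 2)) * g)
    (a : ℝ) (ha : a < 0) :
    2 * Phat.eval (((m : ℝ) + 1) / 2) + g.eval (((m : ℝ) + 1) / 2) = 0 ∧
    ∃ S : Polynomial ℝ,
      2 * Phat.comp (C (((m : ℝ) + 1) / 2) + X) +
          g.comp (C (((m : ℝ) + 1) / 2) + X) = X * S ∧
      ∃ ε > (0 : ℝ), ∃ T₀ : ℝ → ℝ,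
        AnalyticOnNhd ℝ T₀ (Ioo (-ε) ε) ∧
        T₀ 0 = a ∧
        (∀ r ∈ Ioo (-ε) ε, deriv T₀ r =
          -(r * T₀ r * S.eval (r ^ 2 * T₀ r)) * T₀ r /
            Phat.eval (((m : ℝ) + 1) / 2 + r ^ 2 * T₀ r)) ∧
        (∀ ε' > (0 : ℝ), ∀ T : ℝ → ℝ,
          AnalyticOnNhd ℝ T (Ioo (-ε') ε') →
          T 0 = a →
          (∀ r ∈ Ioo (-ε') ε', deriv T r =
            -(r * T r * S.eval (r ^ 2 * T r)) * T r /
              Phat.eval (((m : ℝ) + 1) / 2 + r ^ 2 * T r)) →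
          ∃ δ > (0 : ℝ), EqOn T T₀ (Ioo (-δ) δ)) ∧
        (∀ r ∈ Ioo (-ε) ε, T₀ (-r) = T₀ r) := by
  clear hm hmono hlt hP hQder hQval hPhat hQhat hQhatval
  set L : ℝ := ((m : ℝ) + 1) / 2 with hL
  -- Step 1: g(L) = -2 * Phat(L)
  have hgL : g.eval L = -2 * Phat.eval L := by
    have hd : (derivative Qhat).eval L = g.eval L := by
      rw [hg, derivative_mul]
      simp [derivative_sub]
    rw [← hd, hQhatder]
  have conj1 : 2 * Phat.eval L + g.eval L = 0 := by rw [hgL]; ring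
  refine ⟨conj1, ?_⟩
  -- Step 2: the polynomial S
  set f0 : Polynomial ℝ := 2 * Phat.comp (C L + X) + g.comp (C L + X) with hf0
  have hf00 : f0.coeff 0 = 0 := by
    rw [coeff_zero_eq_eval_zero]
    simp only [hf0, eval_add, eval_mul, eval_comp, eval_ofNat, eval_C, eval_X]
    simpa using conj1
  obtain ⟨S, hS⟩ := X_dvd_iff.2 hf00
  refine ⟨S, hS, ?_⟩
  have hSs : ∀ s : ℝ, 2 * Phat.eval (L + s) + g.eval (L + s) = s * S.eval s := by
    intro s
    have := congrArg (Polynomial.eval s) hS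
    simpa [hf0, eval_comp] using this
  -- Step 3: nonvanishing of Phat and g near L
  have hPL : Phat.eval L ≠ 0 := ne_of_gt hPhatpos
  have hgLne : g.eval L ≠ 0 := by rw [hgL]; intro h; apply hPL; linarith
  have hpolyAA : ∀ (p : Polynomial ℝ) (x : ℝ), AnalyticAt ℝ (fun y : ℝ => p.eval y) x :=
    fun p x => (AnalyticOnNhd.eval_polynomial (𝕜 := ℝ) (A := ℝ) p) x trivial
  have hgshift : AnalyticAt ℝ (fun s : ℝ => g.eval (L + s)) 0 :=
    (hpolyAA g (L + 0)).comp (analyticAt_const.add analyticAt_id)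
  have hPshift : AnalyticAt ℝ (fun s : ℝ => Phat.eval (L + s)) 0 :=
    (hpolyAA Phat (L + 0)).comp (analyticAt_const.add analyticAt_id)
  -- Step 4: analytic G and its antiderivative B
  set G : ℝ → ℝ := fun s => S.eval s / (2 * g.eval (L + s)) with hG
  have hGan : AnalyticAt ℝ G 0 := by
    apply (hpolyAA S 0).div (analyticAt_const.mul hgshift)
    simpa using hgLne
  obtain ⟨B, hBan, hB0, hBd⟩ := exists_antideriv hGan
  -- Step 5: the function ph and its derivative
  set ph : ℝ → ℝ := fun s => s * Real.exp (-2 * B s) with hph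
  have hphan : AnalyticAt ℝ ph 0 := analyticAt_id.mul (analyticAt_const.mul hBan).rexp
  have hph0 : ph 0 = 0 := by simp [hph]
  have hph_deriv : ∀ s : ℝ, HasDerivAt B (G s) s →
      HasDerivAt ph (Real.exp (-2 * B s) * (1 - 2 * s * G s)) s := by
    intro s hs
    have h1 : HasDerivAt (fun x => Real.exp (-2 * B x)) (Real.exp (-2 * B s) * (-2 * G s)) s :=
      (hs.const_mul (-2)).exp
    have h2 : HasDerivAt (fun x => x * Real.exp (-2 * B x))
        (1 * Real.exp (-2 * B s) + s * (Real.exp (-2 * B s) * (-2 * G s))) s :=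
      (hasDerivAt_id' s).mul h1
    convert h2 using 1
    ring
  have hph1 : HasDerivAt ph 1 0 := by
    have h := hph_deriv 0 hBd.self_of_nhds
    simpa [hB0] using h
  have hstrict : HasStrictDerivAt ph 1 0 := by
    have hcd : ContDiffAt ℝ 1 ph 0 := hphan.contDiffAt
    have h := hcd.hasStrictDerivAt one_ne_zero
    rwa [hph1.deriv] at h
  -- Step 6: local inverse ψ
  set Φ := (hstrict.hasStrictFDerivAt_equiv one_ne_zero).toOpenPartialHomeomorph ph with hΦ
  have hΦcoe : ⇑Φ = ph := HasStrictFDerivAt.toOpenPartialHomeomorph_coe _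
  have h0src : (0:ℝ) ∈ Φ.source := HasStrictFDerivAt.mem_toOpenPartialHomeomorph_source _
  have hΦ00 : Φ 0 = 0 := by rw [hΦcoe, hph0]
  obtain ⟨pp, hpp⟩ := hphan
  have hcoeff1 : pp.coeff 1 = 1 := by
    have h := hpp.deriv
    rw [hph1.deriv] at h
    exact h.symm
  have hp1 : pp 1 = (continuousMultilinearCurryFin1 ℝ ℝ ℝ).symm
      (ContinuousLinearEquiv.refl ℝ ℝ : ℝ ≃L[ℝ] ℝ) := by
    refine ContinuousMultilinearMap.ext fun v => ?_
    have hv : v = fun _ => v 0 := funext fun i => congrArg v (Subsingleton.elim i 0)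
    rw [hv]
    rw [pp.apply_eq_pow_smul_coeff, hcoeff1]
    simp
  have hΦps : HasFPowerSeriesAt (⇑Φ) pp 0 := by rw [hΦcoe]; exact hpp
  have hsymm0 := Φ.hasFPowerSeriesAt_symm h0src hΦps hp1
  rw [hΦ00] at hsymm0
  set ψ : ℝ → ℝ := ⇑Φ.symm with hψdef
  have hψps : HasFPowerSeriesAt ψ (pp.leftInv (ContinuousLinearEquiv.refl ℝ ℝ) 0) 0 := hsymm0
  have hψan : AnalyticAt ℝ ψ 0 := ⟨_, hψps⟩
  have hψ0 : ψ 0 = 0 := by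
    have h := Φ.left_inv h0src
    rw [hΦ00] at h
    exact h
  have hinv : ∀ᶠ s in 𝓝 (0:ℝ), ph (ψ s) = s := by
    have htgt : Φ.target ∈ 𝓝 (0:ℝ) := by
      have h := Φ.map_source h0src
      rw [hΦ00] at h
      exact Φ.open_target.mem_nhds h
    filter_upwards [htgt] with s hs
    have := Φ.right_inv hs
    rw [hΦcoe] at this
    exact this
  have hψleft : ∀ᶠ u in 𝓝 (0:ℝ), ψ (ph u) = u := by
    filter_upwards [Φ.open_source.mem_nhds h0src] with u hu
    have := Φ.left_inv hu
    rw [hΦcoe] at this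
    exact this
  have hψd1 : HasStrictDerivAt ψ 1 0 := by
    have h := hstrict.to_local_left_inverse one_ne_zero hψleft
    rw [hph0] at h
    simpa using h
  have hderivψ0 : deriv ψ 0 = 1 := hψd1.hasDerivAt.deriv
  -- Step 7: D = dslope ψ 0
  set D : ℝ → ℝ := dslope ψ 0 with hD
  have hDps := hψps.has_fpower_series_dslope_fslope
  have hDan : AnalyticAt ℝ D 0 := ⟨_, hDps⟩
  have hD0 : D 0 = 1 := by rw [hD, dslope_same, hderivψ0]
  have hsψD : ∀ s : ℝ, ψ s = s * D s := by
    intro s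
    have h := sub_smul_dslope ψ 0 s
    rw [hψ0, sub_zero, sub_zero, smul_eq_mul] at h
    rw [← h, hD]
  -- Step 8: choose radii
  have hall : ∀ᶠ s in 𝓝 (0:ℝ), (Phat.eval (L + s) ≠ 0 ∧ g.eval (L + s) ≠ 0) ∧
      HasDerivAt B (G s) s ∧ ph (ψ s) = s ∧ AnalyticAt ℝ ψ s ∧ AnalyticAt ℝ D s := by
    have e1 : ∀ᶠ s in 𝓝 (0:ℝ), Phat.eval (L + s) ≠ 0 := by
      have := hPshift.continuousAt.eventually_ne (by simpa using hPL)
      simpa using this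
    have e2 : ∀ᶠ s in 𝓝 (0:ℝ), g.eval (L + s) ≠ 0 := by
      have := hgshift.continuousAt.eventually_ne (by simpa using hgLne)
      simpa using this
    exact (e1.and e2).and (hBd.and (hinv.and (hψan.eventually_analyticAt.and
      hDan.eventually_analyticAt)))
  obtain ⟨ρ1, hρ1pos, hρ1⟩ := Metric.eventually_nhds_iff.1 hall
  have hψsmall : ∀ᶠ s in 𝓝 (0:ℝ), dist (ψ s) 0 < ρ1 := by
    have hc : ContinuousAt ψ 0 := hψan.continuousAt
    have : Tendsto ψ (𝓝 0) (𝓝 0) := by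
      have h := hc.tendsto
      rwa [hψ0] at h
    exact this (Metric.ball_mem_nhds _ hρ1pos)
  obtain ⟨ρ2', hρ2'pos, hρ2'⟩ := Metric.eventually_nhds_iff.1 hψsmall
  set ρ2 : ℝ := min ρ1 ρ2' with hρ2def
  have hρ2pos : 0 < ρ2 := lt_min hρ1pos hρ2'pos
  have hρ2le : ρ2 ≤ ρ1 := min_le_left _ _
  -- Step 9: choose ε and define T₀
  set ε : ℝ := min 1 (ρ2 / (|a| + 1)) with hε
  have hεpos : 0 < ε := lt_min one_pos (div_pos hρ2pos (by positivity))
  have hsmall : ∀ r : ℝ, r ∈ Ioo (-ε) ε → |a * r ^ 2| < ρ2 := by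
    intro r hr
    have hrabs : |r| < ε := abs_lt.2 ⟨hr.1, hr.2⟩
    have hε1 : ε ≤ 1 := min_le_left _ _
    have hε2 : ε ≤ ρ2 / (|a| + 1) := min_le_right _ _
    have h1 : |a * r ^ 2| = |a| * (|r| * |r|) := by
      rw [abs_mul, abs_pow]
      ring
    have h2 : ε * (|a| + 1) ≤ ρ2 := by
      rw [le_div_iff₀ (by positivity : (0:ℝ) < |a| + 1)] at hε2
      exact hε2
    rw [h1]
    have h3 : |r| * |r| ≤ ε := by nlinarith [abs_nonneg r]
    calc |a| * (|r| * |r|) ≤ |a| * ε := mul_le_mul_of_nonneg_left h3 (abs_nonneg a)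
      _ < (|a| + 1) * ε := by nlinarith
      _ ≤ ρ2 := by rw [mul_comm]; exact h2
  -- helper to use hρ1 with |s| < ρ1
  have hρ1' : ∀ s : ℝ, |s| < ρ1 → (Phat.eval (L + s) ≠ 0 ∧ g.eval (L + s) ≠ 0) ∧
      HasDerivAt B (G s) s ∧ ph (ψ s) = s ∧ AnalyticAt ℝ ψ s ∧ AnalyticAt ℝ D s := by
    intro s hs
    exact hρ1 (by simpa [Real.dist_eq] using hs)
  have hρ2'' : ∀ s : ℝ, |s| < ρ2 → |ψ s| < ρ1 := by
    intro s hs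
    have h := hρ2' (y := s) (by simpa [Real.dist_eq] using lt_of_lt_of_le hs (min_le_right _ _))
    simpa [Real.dist_eq] using h
  set T₀ : ℝ → ℝ := fun r => a * D (a * r ^ 2) with hT₀
  have hT₀0 : T₀ 0 = a := by simp [hT₀, hD0]
  have hana : AnalyticOnNhd ℝ T₀ (Ioo (-ε) ε) := by
    intro r hr
    have hmem : |a * r ^ 2| < ρ1 := lt_of_lt_of_le (hsmall r hr) hρ2le
    have hDs : AnalyticAt ℝ D (a * r ^ 2) := (hρ1' _ hmem).2.2.2.2
    have hin : AnalyticAt ℝ (fun x : ℝ => a * x ^ 2) r :=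
      analyticAt_const.mul (analyticAt_id.pow 2)
    have hcomp : AnalyticAt ℝ (fun x : ℝ => D (a * x ^ 2)) r :=
      AnalyticAt.comp (f := fun x : ℝ => a * x ^ 2) (g := D) hDs hin
    exact analyticAt_const.mul hcomp
  have hode : ∀ r ∈ Ioo (-ε) ε, deriv T₀ r =
      -(r * T₀ r * S.eval (r ^ 2 * T₀ r)) * T₀ r / Phat.eval (L + r ^ 2 * T₀ r) := by
    intro r hr
    have hsmem : |a * r ^ 2| < ρ2 := hsmall r hr
    have hsρ1 : |a * r ^ 2| < ρ1 := lt_of_lt_of_le hsmem hρ2le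
    obtain ⟨⟨hPs, hgs⟩, hBs, hphs, hψs_an, hDs_an⟩ := hρ1' _ hsρ1
    by_cases hr0 : r = 0
    · subst hr0
      have hinner : HasDerivAt (fun x : ℝ => a * x ^ 2) 0 (0:ℝ) := by
        have h := (hasDerivAt_pow 2 (0:ℝ)).const_mul a
        simpa using h
      have hDd : HasDerivAt D (deriv D 0) ((fun x : ℝ => a * x ^ 2) 0) := by
        simpa using hDan.differentiableAt.hasDerivAt
      have hcomp : HasDerivAt T₀ 0 0 := by
        have h := (HasDerivAt.comp (0:ℝ) hDd hinner).const_mul a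
        simpa using h
      rw [hcomp.deriv]
      simp
    · -- r ≠ 0
      set s : ℝ := a * r ^ 2 with hs_def
      set u : ℝ := ψ s with hu_def
      have huρ1 : |u| < ρ1 := hρ2'' s hsmem
      obtain ⟨⟨hPu, hgu⟩, hBu, -, -, -⟩ := hρ1' _ huρ1
      have hψd : HasDerivAt ψ (deriv ψ s) s := hψs_an.differentiableAt.hasDerivAt
      set dψ : ℝ := deriv ψ s with hdψ_def
      have hphu : HasDerivAt ph (Real.exp (-2 * B u) * (1 - 2 * u * G u)) u := hph_deriv u hBu
      have hchain : HasDerivAt (fun x => ph (ψ x))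
          (Real.exp (-2 * B u) * (1 - 2 * u * G u) * dψ) s := HasDerivAt.comp (h₂ := ph) s hphu hψd
      have hid : (fun x => ph (ψ x)) =ᶠ[𝓝 s] id := by
        have hopen : {x : ℝ | |x| < ρ1} ∈ 𝓝 s :=
          (isOpen_Iio.preimage continuous_abs).mem_nhds hsρ1
        filter_upwards [hopen] with x hx
        exact (hρ1' x hx).2.2.1
      have hkey1 : Real.exp (-2 * B u) * (1 - 2 * u * G u) * dψ = 1 := by
        have h2 : HasDerivAt (fun x => ph (ψ x)) 1 s := by
          have := (hasDerivAt_id s).congr_of_eventuallyEq hid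
          simpa using this
        exact hchain.unique h2
      have hkey2 : u * Real.exp (-2 * B u) = a * r ^ 2 := hphs
      have hueq : u = r ^ 2 * T₀ r := by
        have h := hsψD s
        simp only [hu_def, hT₀, ← hs_def]
        rw [h, hs_def]
        ring
      have hin2 : HasDerivAt (fun x : ℝ => a * x ^ 2) (a * (2 * r)) r := by
        have h := (hasDerivAt_pow 2 r).const_mul a
        simpa using h
      have hnum : HasDerivAt (fun x : ℝ => ψ (a * x ^ 2)) (dψ * (a * (2 * r))) r :=
        HasDerivAt.comp r hψd hin2
      have hden : HasDerivAt (fun x : ℝ => x ^ 2) (2 * r) r := by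
        simpa using hasDerivAt_pow 2 r
      have hquot := hnum.div hden (pow_ne_zero 2 hr0)
      have hTeq : T₀ =ᶠ[𝓝 r] fun x => ψ (a * x ^ 2) / x ^ 2 := by
        filter_upwards [eventually_ne_nhds hr0] with x hx
        rw [hsψD (a * x ^ 2)]
        simp only [hT₀]
        field_simp
      have hT₀d : HasDerivAt T₀
          ((dψ * (a * (2 * r)) * r ^ 2 - ψ s * (2 * r)) / (r ^ 2) ^ 2) r := by
        exact hquot.congr_of_eventuallyEq hTeq
      rw [hT₀d.deriv, ← hueq]
      -- now pure algebra
      have hXne : Real.exp (-2 * B u) ≠ 0 := Real.exp_ne_zero _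
      have hk4 : u * S.eval u = 2 * Phat.eval (L + u) + g.eval (L + u) := (hSs u).symm
      have hGu : G u = S.eval u / (2 * g.eval (L + u)) := rfl
      have hψs : ψ s = u := rfl
      rw [hψs, div_eq_div_iff (pow_ne_zero 2 (pow_ne_zero 2 hr0)) hPu]
      have e3 : Real.exp (-2 * B u) * dψ * (g.eval (L + u) - u * S.eval u)
          = g.eval (L + u) := by
        have h := hkey1
        rw [hGu] at h
        field_simp [hgu] at h
        rw [show (-(2 * B u)) = (-2 * B u) by ring] at h
        linear_combination h
      have e5 : Real.exp (-2 * B u) * dψ * (2 * Phat.eval (L + u)) = - g.eval (L + u) := by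
        linear_combination -e3 - Real.exp (-2 * B u) * dψ * hk4
      linear_combination (r * u) * e5 - (2 * r * dψ * Phat.eval (L + u)) * hkey2
        + (r * u) * hk4 - (r * S.eval u * (r ^ 2 * T₀ r + u)) * hueq
  refine ⟨ε, hεpos, T₀, hana, hT₀0, hode, ?_, ?_⟩
  · -- uniqueness
    intro ε' hε' T hTan hT0 hTode
    set V : ℝ × ℝ → ℝ := fun z =>
      -(z.1 * z.2 * S.eval (z.1 ^ 2 * z.2)) * z.2 / Phat.eval (L + z.1 ^ 2 * z.2) with hV
    have hVan : AnalyticAt ℝ V (0, a) := by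
      have h1 : AnalyticAt ℝ (fun z : ℝ × ℝ => z.1) (0, a) := analyticAt_fst
      have h2 : AnalyticAt ℝ (fun z : ℝ × ℝ => z.2) (0, a) := analyticAt_snd
      have hinner : AnalyticAt ℝ (fun z : ℝ × ℝ => z.1 ^ 2 * z.2) (0, a) := (h1.pow 2).mul h2
      have hSe : AnalyticAt ℝ (fun z : ℝ × ℝ => S.eval (z.1 ^ 2 * z.2)) (0, a) :=
        AnalyticAt.comp (g := fun y : ℝ => S.eval y) (hpolyAA S _) hinner
      have hPe : AnalyticAt ℝ (fun z : ℝ × ℝ => Phat.eval (L + z.1 ^ 2 * z.2)) (0, a) :=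
        AnalyticAt.comp (g := fun y : ℝ => Phat.eval y) (hpolyAA Phat _)
          (analyticAt_const.add hinner)
      refine AnalyticAt.div ((((h1.mul h2).mul hSe).neg).mul h2) hPe ?_
      show Phat.eval (L + (0:ℝ) ^ 2 * a) ≠ 0
      simpa using hPL
    have hVcd : ContDiffAt ℝ 1 V (0, a) := hVan.contDiffAt
    obtain ⟨K, t, htn, hlip⟩ := hVcd.exists_lipschitzOnWith
    obtain ⟨η, hη0, hball⟩ := Metric.mem_nhds_iff.1 htn
    set st : ℝ → Set ℝ := fun t' => {y | |t'| < η ∧ dist y a < η} with hst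
    have hv : ∀ t', LipschitzOnWith K (fun y => V (t', y)) (st t') := by
      intro t' y hy y' hy'
      obtain ⟨ht', hya⟩ := hy
      obtain ⟨-, hya'⟩ := hy'
      have hmem : (t', y) ∈ t := hball (by
        rw [Metric.mem_ball, Prod.dist_eq]
        exact max_lt (by simpa [Real.dist_eq] using ht') hya)
      have hmem' : (t', y') ∈ t := hball (by
        rw [Metric.mem_ball, Prod.dist_eq]
        exact max_lt (by simpa [Real.dist_eq] using ht') hya')
      have h := hlip hmem hmem'
      calc edist (V (t', y)) (V (t', y')) ≤ K * edist ((t', y) : ℝ × ℝ) (t', y') := h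
        _ = K * edist y y' := by
            rw [Prod.edist_eq, edist_self, max_eq_right zero_le]
    have hT₀c : ContinuousAt T₀ 0 := (hana 0 ⟨by linarith, hεpos⟩).continuousAt
    have hTc : ContinuousAt T 0 := (hTan 0 ⟨by linarith, hε'⟩).continuousAt
    have hev : ∀ᶠ t' in 𝓝 (0:ℝ), |t'| < η ∧ dist (T t') a < η ∧ dist (T₀ t') a < η ∧
        t' ∈ Ioo (-ε') ε' ∧ t' ∈ Ioo (-ε) ε := by
      have e1 : ∀ᶠ t' in 𝓝 (0:ℝ), |t'| < η := by
        filter_upwards [Metric.ball_mem_nhds (0:ℝ) hη0] with x hx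
        simpa [Real.dist_eq] using hx
      have e2 : ∀ᶠ t' in 𝓝 (0:ℝ), dist (T t') a < η := by
        have h := hTc.tendsto
        rw [hT0] at h
        filter_upwards [h (Metric.ball_mem_nhds a hη0)] with x hx
        simpa using hx
      have e3 : ∀ᶠ t' in 𝓝 (0:ℝ), dist (T₀ t') a < η := by
        have h := hT₀c.tendsto
        rw [hT₀0] at h
        filter_upwards [h (Metric.ball_mem_nhds a hη0)] with x hx
        simpa using hx
      have e4 : ∀ᶠ t' in 𝓝 (0:ℝ), t' ∈ Ioo (-ε') ε' :=
        (isOpen_Ioo.mem_nhds ⟨by linarith, hε'⟩)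
      have e5 : ∀ᶠ t' in 𝓝 (0:ℝ), t' ∈ Ioo (-ε) ε :=
        (isOpen_Ioo.mem_nhds ⟨by linarith, hεpos⟩)
      exact e1.and (e2.and (e3.and (e4.and e5)))
    obtain ⟨δ, hδ0, hδ⟩ := Metric.eventually_nhds_iff.1 hev
    refine ⟨δ, hδ0, ?_⟩
    have heq0 : T 0 = T₀ 0 := by rw [hT0, hT₀0]
    refine ODE_solution_unique_of_mem_Ioo (v := fun t' y => V (t', y)) (s := st) (fun t' _ => hv t')
      (t₀ := 0) ⟨by linarith, hδ0⟩ ?_ ?_ heq0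
    · intro t' ht'
      have hδin : dist t' 0 < δ := by
        rw [Real.dist_eq, sub_zero]
        exact abs_lt.2 ⟨ht'.1, ht'.2⟩
      obtain ⟨h1, h2, h3, h4, h5⟩ := hδ hδin
      constructor
      · have hdT := (hTan t' h4).differentiableAt.hasDerivAt
        rw [hTode t' h4] at hdT
        exact hdT
      · exact ⟨h1, h2⟩
    · intro t' ht'
      have hδin : dist t' 0 < δ := by
        rw [Real.dist_eq, sub_zero]
        exact abs_lt.2 ⟨ht'.1, ht'.2⟩
      obtain ⟨h1, h2, h3, h4, h5⟩ := hδ hδin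
      constructor
      · have hdT := (hana t' h5).differentiableAt.hasDerivAt
        rw [hode t' h5] at hdT
        exact hdT
      · exact ⟨h1, h3⟩
  · -- evenness
    intro r hr
    show a * D (a * (-r) ^ 2) = a * D (a * r ^ 2)
    rw [neg_pow]
    norm_num
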